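/- Let P be a finite pure poset of length ℓ with minimum element 0̂ and rank function ρ, uniform with associated uniform sequence (P_0, …, P_ℓ), and let ϖ_P be a uniform P-compatible weight function with values in a commutative ring R, inducing a P_i-compatible weight function ϖ_{P_i} for each i. Then the (ℓ+1) × (ℓ+1) matrices [w_{i−j}(P_i, ϖ_{P_i})]_{0 ≤ i,j ≤ ℓ} and [W_{i−j}(P_i, ϖ_{P_i})]_{0 ≤ i,j ≤ ℓ} are inverses of each other over R. -/

import Mathlib

-- `mobiusAux r m a b` iterates the defining recursion of the Möbius function of
-- the relation `r` `m` times; for `m` at least the length of the interval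
-- `[a,b]` this computes the Möbius function `μ̄(a,b)` of the poset.
open Classical in
noncomputable def mobiusAux {Q : Type*} (r : Q → Q → Prop) : ℕ → Q → Q → ℤ
  | 0, a, b => if a = b then 1 else 0
  | m+1, a, b => if a = b then 1 else - ∑ᶠ c ∈ {c | r a c ∧ r c b ∧ c ≠ b}, mobiusAux r m a c

/-- the Möbius function `μ̄_Q(a,b)` of a finite poset `Q` -/
noncomputable def mobiusP (Q : Type*) [PartialOrder Q] [Fintype Q] (a b : Q) : ℤ :=
  mobiusAux (· ≤ ·) (Fintype.card Q) a b

/-- the weighted Whitney number of the first kind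
`w_m(Q,ϖ) = Σ_{ρ(α) = m} μ̄_Q(0̂,α)·ϖ(0̂,α)` -/
noncomputable def wWhitney {R : Type*} [CommRing R]
    (Q : Type*) [PartialOrder Q] [Fintype Q] [OrderBot Q]
    (ρ : Q → ℕ) (ϖ : Q → Q → R) (m : ℕ) : R :=
  ∑ᶠ a ∈ {a : Q | ρ a = m}, (mobiusP Q ⊥ a : ℤ) • ϖ ⊥ a

/-- the weighted Whitney number of the second kind `W_m(Q,ϖ) = Σ_{ρ(α) = m} ϖ(0̂,α)` -/
noncomputable def WWhitney {R : Type*} [CommRing R]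
    (Q : Type*) [PartialOrder Q] [Fintype Q] [OrderBot Q]
    (ρ : Q → ℕ) (ϖ : Q → Q → R) (m : ℕ) : R :=
  ∑ᶠ a ∈ {a : Q | ρ a = m}, ϖ ⊥ a

open scoped Classical

lemma finsum_setOf_eq_sum_filter {Q M : Type*} [Fintype Q] [AddCommMonoid M]
    (p : Q → Prop) (f : Q → M) :
    ∑ᶠ a ∈ {a | p a}, f a = ∑ a ∈ Finset.univ.filter p, f a := by
  rw [← finsum_mem_coe_finset]; congr 1; ext a; simp

lemma mobiusAux_self {Q : Type*} (r : Q → Q → Prop) (m : ℕ) (a : Q) :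
    mobiusAux r m a a = 1 := by cases m <;> simp [mobiusAux]

lemma mobiusAux_succ {Q : Type*} [Fintype Q] (r : Q → Q → Prop) (m : ℕ) (a b : Q) :
    mobiusAux r (m+1) a b = if a = b then 1 else
      - ∑ c ∈ Finset.univ.filter (fun c => r a c ∧ r c b ∧ c ≠ b), mobiusAux r m a c := by
  rw [mobiusAux, finsum_setOf_eq_sum_filter]
  congr

section stable
variable {Q : Type*} [Fintype Q] (r : Q → Q → Prop)
  (hrefl : ∀ a : Q, r a a)
  (htrans : ∀ {a b c : Q}, r a b → r b c → r a c)
  (hanti : ∀ {a b : Q}, r a b → r b a → a = b)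

include hrefl htrans hanti in
lemma mobiusAux_step : ∀ k (a b : Q),
    (Finset.univ.filter fun c => r a c ∧ r c b).card ≤ k →
    mobiusAux r (k+1) a b = mobiusAux r k a b := by
  intro k
  induction k using Nat.strong_induction_on with
  | _ k IH =>
    intro a b hcard
    by_cases hab : a = b
    · subst hab; simp [mobiusAux_self]
    · match k, hcard with
      | 0, hcard =>
        rw [mobiusAux_succ]
        have he : (Finset.univ.filter fun c => r a c ∧ r c b ∧ c ≠ b) = ∅ := by
          apply Finset.eq_empty_of_forall_notMem
          intro c hc
          simp only [Finset.mem_filter] at hc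
          have : c ∈ Finset.univ.filter fun c => r a c ∧ r c b := by
            simp [hc.2.1, hc.2.2.1]
          have := Finset.card_pos.mpr ⟨c, this⟩
          omega
        simp [hab, he, mobiusAux]
      | (k'+1), hcard =>
        rw [mobiusAux_succ, mobiusAux_succ, if_neg hab, if_neg hab]
        congr 1
        apply Finset.sum_congr rfl
        intro c hc
        simp only [Finset.mem_filter] at hc
        obtain ⟨-, hac, hcb, hcb'⟩ := hc
        apply IH k' (Nat.lt_succ_self _)
        have hsub : (Finset.univ.filter fun d => r a d ∧ r d c) ⊆
            (Finset.univ.filter fun d => r a d ∧ r d b) := by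
          intro d hd
          simp only [Finset.mem_filter] at hd ⊢
          exact ⟨Finset.mem_univ _, hd.2.1, htrans hd.2.2 hcb⟩
        have hbmem : b ∉ (Finset.univ.filter fun d => r a d ∧ r d c) := by
          simp only [Finset.mem_filter]
          rintro ⟨-, -, hbc⟩
          exact hcb' (hanti hcb hbc)
        have hbmem2 : b ∈ (Finset.univ.filter fun d => r a d ∧ r d b) := by
          simp only [Finset.mem_filter]
          exact ⟨Finset.mem_univ _, htrans hac hcb, hrefl b⟩
        have := Finset.card_lt_card (Finset.ssubset_iff_of_subset hsub |>.mpr ⟨b, hbmem2, hbmem⟩)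
        omega

include hrefl htrans hanti in
lemma mobiusAux_stable : ∀ m k (a b : Q),
    (Finset.univ.filter fun c => r a c ∧ r c b).card ≤ k → k ≤ m →
    mobiusAux r m a b = mobiusAux r k a b := by
  intro m
  induction m with
  | zero => intro k a b _ hk; interval_cases k; rfl
  | succ m IH =>
    intro k a b hc hk
    rcases Nat.eq_or_lt_of_le hk with h | h
    · subst h; rfl
    · rw [mobiusAux_step r hrefl htrans hanti m a b (hc.trans (by omega)),
        IH k a b hc (by omega)]
end stable

section sumid
variable {Q : Type*} [Fintype Q] (r : Q → Q → Prop)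
  (hrefl : ∀ a : Q, r a a)
  (htrans : ∀ {a b c : Q}, r a b → r b c → r a c)
  (hanti : ∀ {a b : Q}, r a b → r b a → a = b)

include hrefl htrans hanti in
lemma mobiusAux_sum (a b : Q) (hab : r a b) :
    ∑ c ∈ Finset.univ.filter (fun c => r a c ∧ r c b), mobiusAux r (Fintype.card Q) a c
      = if a = b then 1 else 0 := by
  by_cases h : a = b
  · subst h
    have : (Finset.univ.filter fun c => r a c ∧ r c a) = {a} := by
      ext c
      simp only [Finset.mem_filter, Finset.mem_univ, true_and, Finset.mem_singleton]
      constructor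
      · rintro ⟨h1, h2⟩; exact (hanti h1 h2).symm
      · rintro rfl; exact ⟨hrefl _, hrefl _⟩
    simp [this, mobiusAux_self]
  · rw [if_neg h]
    have hcard : (Finset.univ.filter fun c => r a c ∧ r c b).card ≤ Fintype.card Q :=
      (Finset.card_filter_le _ _).trans (by simp)
    have hstep := mobiusAux_step r hrefl htrans hanti (Fintype.card Q) a b hcard
    rw [mobiusAux_succ, if_neg h] at hstep
    have hsplit : (Finset.univ.filter fun c => r a c ∧ r c b)
        = insert b (Finset.univ.filter fun c => r a c ∧ r c b ∧ c ≠ b) := by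
      ext c
      simp only [Finset.mem_filter, Finset.mem_univ, true_and, Finset.mem_insert]
      constructor
      · rintro ⟨h1, h2⟩
        by_cases hc : c = b
        · exact Or.inl hc
        · exact Or.inr ⟨h1, h2, hc⟩
      · rintro (rfl | ⟨h1, h2, h3⟩)
        · exact ⟨hab, hrefl _⟩
        · exact ⟨h1, h2⟩
    rw [hsplit, Finset.sum_insert (by simp)]
    rw [← hstep]
    ring

end sumid

section transfer
variable {Q Q' : Type*} [PartialOrder Q] [PartialOrder Q']

lemma mobiusAux_transfer (f : Q → Q') (a b₀ : Q)
    (hmono : ∀ c c', a ≤ c → c ≤ b₀ → a ≤ c' → c' ≤ b₀ → (c ≤ c' ↔ f c ≤ f c'))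
    (hsurj : ∀ d, f a ≤ d → d ≤ f b₀ → ∃ c, a ≤ c ∧ c ≤ b₀ ∧ f c = d) :
    ∀ m (b : Q), a ≤ b → b ≤ b₀ →
      mobiusAux (· ≤ ·) m a b = mobiusAux (· ≤ ·) m (f a) (f b) := by
  intro m
  induction m with
  | zero =>
    intro b hab hb
    have hiff : a = b ↔ f a = f b := by
      constructor
      · rintro rfl; rfl
      · intro hf
        exact le_antisymm hab
          ((hmono b a hab hb le_rfl (hab.trans hb)).mpr hf.ge)
    simp only [mobiusAux]
    by_cases h : a = b
    · rw [if_pos h, if_pos (hiff.mp h)]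
    · rw [if_neg h, if_neg (fun hf => h (hiff.mpr hf))]
  | succ m IH =>
    intro b hab hb
    have hiff : a = b ↔ f a = f b := by
      constructor
      · rintro rfl; rfl
      · intro hf
        exact le_antisymm hab
          ((hmono b a hab hb le_rfl (hab.trans hb)).mpr hf.ge)
    by_cases h : a = b
    · subst h; simp [mobiusAux_self]
    · rw [mobiusAux, mobiusAux, if_neg h, if_neg (fun hf => h (hiff.mpr hf))]
      congr 1
      apply finsum_mem_eq_of_bijOn f
      · refine ⟨?_, ?_, ?_⟩
        · rintro c ⟨h1, h2, h3⟩
          refine ⟨(hmono a c le_rfl (hab.trans hb) h1 (h2.trans hb)).mp h1,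
            (hmono c b h1 (h2.trans hb) hab hb).mp h2, ?_⟩
          intro hfc
          exact h3 (le_antisymm h2 ((hmono b c hab hb h1 (h2.trans hb)).mpr hfc.ge))
        · rintro c ⟨h1, h2, h3⟩ c' ⟨h1', h2', h3'⟩ hcc'
          exact le_antisymm
            ((hmono c c' h1 (h2.trans hb) h1' (h2'.trans hb)).mpr hcc'.le)
            ((hmono c' c h1' (h2'.trans hb) h1 (h2.trans hb)).mpr hcc'.ge)
        · rintro d ⟨h1, h2, h3⟩
          have hfb : f b ≤ f b₀ := (hmono b b₀ hab hb (hab.trans hb) le_rfl).mp hb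
          obtain ⟨c, hc1, hc2, rfl⟩ := hsurj d h1 (h2.trans hfb)
          refine ⟨c, ⟨(hmono a c le_rfl (hab.trans hb) hc1 hc2).mpr h1,
            (hmono c b hc1 hc2 hab hb).mpr h2, fun hcb => h3 (by rw [hcb])⟩, rfl⟩
      · intro c hc
        exact IH c hc.1 (hc.2.1.trans hb)

lemma mobiusP_transfer [Fintype Q] [Fintype Q'] (f : Q → Q') (a b : Q) (hab : a ≤ b)
    (hmono : ∀ c c', a ≤ c → c ≤ b → a ≤ c' → c' ≤ b → (c ≤ c' ↔ f c ≤ f c'))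
    (hsurj : ∀ d, f a ≤ d → d ≤ f b → ∃ c, a ≤ c ∧ c ≤ b ∧ f c = d) :
    mobiusP Q a b = mobiusP Q' (f a) (f b) := by
  set M := max (Fintype.card Q) (Fintype.card Q') with hM
  have h1 : mobiusP Q a b = mobiusAux (· ≤ ·) M a b := by
    rw [mobiusP]
    exact (mobiusAux_stable (· ≤ ·) (fun a => le_refl a) (fun h h' => le_trans h h')
      (fun h h' => le_antisymm h h') M (Fintype.card Q) a b
      ((Finset.card_filter_le _ _).trans (by simp)) (le_max_left _ _)).symm
  have h2 : mobiusP Q' (f a) (f b) = mobiusAux (· ≤ ·) M (f a) (f b) := by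
    rw [mobiusP]
    exact (mobiusAux_stable (· ≤ ·) (fun a => le_refl a) (fun h h' => le_trans h h')
      (fun h h' => le_antisymm h h') M (Fintype.card Q') (f a) (f b)
      ((Finset.card_filter_le _ _).trans (by simp)) (le_max_right _ _)).symm
  rw [h1, h2, mobiusAux_transfer f a b hmono hsurj M b hab le_rfl]

end transfer

section mobid
variable {Q : Type*} [PartialOrder Q] [Fintype Q]

/-- dual Möbius function -/
noncomputable def nuP (Q : Type*) [PartialOrder Q] [Fintype Q] (a b : Q) : ℤ :=
  mobiusAux (fun x y : Q => y ≤ x) (Fintype.card Q) b a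

lemma mobiusP_sum_left (a b : Q) (hab : a ≤ b) :
    ∑ c ∈ Finset.univ.filter (fun c => a ≤ c ∧ c ≤ b), mobiusP Q a c
      = if a = b then 1 else 0 :=
  mobiusAux_sum (· ≤ ·) (fun a => le_refl a) (fun h h' => le_trans h h')
    (fun h h' => le_antisymm h h') a b hab

lemma nuP_sum (a b : Q) (hab : a ≤ b) :
    ∑ c ∈ Finset.univ.filter (fun c => a ≤ c ∧ c ≤ b), nuP Q c b
      = if a = b then 1 else 0 := by
  have := mobiusAux_sum (fun x y : Q => y ≤ x) (fun a => le_refl a)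
    (fun h h' => le_trans h' h) (fun h h' => le_antisymm h' h) b a hab
  have hset : (Finset.univ.filter fun c : Q => (fun x y : Q => y ≤ x) b c ∧
      (fun x y : Q => y ≤ x) c a) = (Finset.univ.filter fun c => a ≤ c ∧ c ≤ b) := by
    ext c; simp only [Finset.mem_filter]; tauto
  rw [hset] at this
  rw [show (fun c : Q => nuP Q c b) = fun c => mobiusAux (fun x y : Q => y ≤ x) (Fintype.card Q) b c from rfl]
  rw [this]
  by_cases h : a = b
  · simp [h]
  · rw [if_neg h, if_neg (fun hh => h hh.symm)]

lemma mobiusP_eq_nuP (a b : Q) (hab : a ≤ b) : mobiusP Q a b = nuP Q a b := by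
  have key : ∑ c ∈ Finset.univ.filter (fun c => a ≤ c ∧ c ≤ b),
      ∑ d ∈ Finset.univ.filter (fun d => c ≤ d ∧ d ≤ b), mobiusP Q a c * nuP Q d b
      = ∑ d ∈ Finset.univ.filter (fun d => a ≤ d ∧ d ≤ b),
      ∑ c ∈ Finset.univ.filter (fun c => a ≤ c ∧ c ≤ d), mobiusP Q a c * nuP Q d b := by
    apply Finset.sum_comm'
    intro c d
    simp only [Finset.mem_filter, Finset.mem_univ, true_and]
    constructor
    · rintro ⟨⟨h1, h2⟩, h3, h4⟩; exact ⟨⟨h1, h3⟩, h1.trans h3, h4⟩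
    · rintro ⟨⟨h1, h2⟩, h3, h4⟩; exact ⟨⟨h1, h2.trans h4⟩, h2, h4⟩
  have lhs : ∑ c ∈ Finset.univ.filter (fun c => a ≤ c ∧ c ≤ b),
      ∑ d ∈ Finset.univ.filter (fun d => c ≤ d ∧ d ≤ b), mobiusP Q a c * nuP Q d b
      = mobiusP Q a b := by
    have : ∀ c ∈ Finset.univ.filter (fun c => a ≤ c ∧ c ≤ b),
        ∑ d ∈ Finset.univ.filter (fun d => c ≤ d ∧ d ≤ b), mobiusP Q a c * nuP Q d b
        = mobiusP Q a c * (if c = b then 1 else 0) := by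
      intro c hc
      simp only [Finset.mem_filter, Finset.mem_univ, true_and] at hc
      rw [← Finset.mul_sum, nuP_sum c b hc.2]
    rw [Finset.sum_congr rfl this]
    simp only [mul_ite, mul_one, mul_zero]
    rw [Finset.sum_ite_eq' _ b (fun c => mobiusP Q a c)]
    simp [hab]
  have rhs : ∑ d ∈ Finset.univ.filter (fun d => a ≤ d ∧ d ≤ b),
      ∑ c ∈ Finset.univ.filter (fun c => a ≤ c ∧ c ≤ d), mobiusP Q a c * nuP Q d b
      = nuP Q a b := by
    have : ∀ d ∈ Finset.univ.filter (fun d => a ≤ d ∧ d ≤ b),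
        ∑ c ∈ Finset.univ.filter (fun c => a ≤ c ∧ c ≤ d), mobiusP Q a c * nuP Q d b
        = (if a = d then 1 else 0) * nuP Q d b := by
      intro d hd
      simp only [Finset.mem_filter, Finset.mem_univ, true_and] at hd
      rw [← Finset.sum_mul, mobiusP_sum_left a d hd.1]
    rw [Finset.sum_congr rfl this]
    have : ∀ d ∈ Finset.univ.filter (fun d => a ≤ d ∧ d ≤ b),
        (if a = d then 1 else 0) * nuP Q d b = if d = a then nuP Q d b else 0 := by
      intro d _
      by_cases h : a = d
      · simp [h]
      · rw [if_neg h, if_neg (fun hh => h hh.symm)]; ring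
    rw [Finset.sum_congr rfl this, Finset.sum_ite_eq' _ a (fun d => nuP Q d b)]
    simp [hab]
  rw [← lhs, key, rhs]

lemma mobiusP_sum_right (a b : Q) (hab : a ≤ b) :
    ∑ c ∈ Finset.univ.filter (fun c => a ≤ c ∧ c ≤ b), mobiusP Q c b
      = if a = b then 1 else 0 := by
  rw [← nuP_sum a b hab]
  apply Finset.sum_congr rfl
  intro c hc
  simp only [Finset.mem_filter, Finset.mem_univ, true_and] at hc
  exact mobiusP_eq_nuP c b hc.2

end mobid

section rank
variable {Q : Type*} [PartialOrder Q] [Fintype Q] (ρQ : Q → ℕ)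
  (hcov : ∀ a b : Q, a ⋖ b → ρQ b = ρQ a + 1)

lemma exists_le_covby {a b : Q} (h : a < b) : ∃ c, a ≤ c ∧ c ⋖ b := by
  classical
  obtain ⟨c, hc, hmax⟩ : ∃ i ∈ (Finset.univ.filter fun c => a ≤ c ∧ c < b),
      ∀ x ∈ (Finset.univ.filter fun c => a ≤ c ∧ c < b), ¬ i < x := by
    obtain ⟨i, hi⟩ := Finset.exists_maximal (s := Finset.univ.filter fun c => a ≤ c ∧ c < b)
      ⟨a, by simp only [Finset.mem_filter, Finset.mem_univ, true_and]; exact ⟨le_rfl, h⟩⟩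
    exact ⟨i, hi.1, fun x hx hlt => hlt.not_ge (hi.2 hx hlt.le)⟩
  simp only [Finset.mem_filter, Finset.mem_univ, true_and] at hc
  refine ⟨c, hc.1, hc.2, fun d hcd hdb => ?_⟩
  refine hmax d ?_ hcd
  simp only [Finset.mem_filter, Finset.mem_univ, true_and]
  exact ⟨hc.1.trans hcd.le, hdb⟩

include hcov in
lemma rank_strict_mono {a b : Q} (h : a < b) : ρQ a < ρQ b := by
  have : ∀ n, ∀ b : Q, ρQ b ≤ n → ∀ a : Q, a < b → ρQ a < ρQ b := by
    intro n
    induction n with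
    | zero =>
      intro b hb a hab
      obtain ⟨c, hac, hcb⟩ := exists_le_covby hab
      have := hcov c b hcb
      omega
    | succ n IH =>
      intro b hb a hab
      obtain ⟨c, hac, hcb⟩ := exists_le_covby hab
      have hc := hcov c b hcb
      rcases eq_or_lt_of_le hac with rfl | hlt
      · omega
      · have := IH c (by omega) a hlt
        omega
  exact this (ρQ b) b le_rfl a h

include hcov in
lemma rank_mono {a b : Q} (h : a ≤ b) : ρQ a ≤ ρQ b := by
  rcases eq_or_lt_of_le h with rfl | h
  · exact le_rfl
  · exact (rank_strict_mono ρQ hcov h).le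

include hcov in
lemma eq_of_le_of_rank_le {a b : Q} (h : a ≤ b) (hr : ρQ b ≤ ρQ a) : a = b := by
  rcases eq_or_lt_of_le h with rfl | h
  · rfl
  · exact absurd (rank_strict_mono ρQ hcov h) (by omega)

include hcov in
lemma eq_bot_of_rank_zero [OrderBot Q] (hbot : ρQ ⊥ = 0) {a : Q} (ha : ρQ a = 0) :
    a = ⊥ :=
  (eq_of_le_of_rank_le ρQ hcov bot_le (by omega)).symm

include hcov in
lemma exists_rank_le [OrderBot Q] (hbot : ρQ ⊥ = 0) (a : Q) (m : ℕ) (h : m ≤ ρQ a) :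
    ∃ c, c ≤ a ∧ ρQ c = m := by
  have : ∀ n, ∀ a : Q, ρQ a ≤ n → ∀ m ≤ ρQ a, ∃ c, c ≤ a ∧ ρQ c = m := by
    intro n
    induction n with
    | zero => intro a ha m hm; exact ⟨a, le_rfl, by omega⟩
    | succ n IH =>
      intro a ha m hm
      rcases eq_or_lt_of_le hm with rfl | hlt
      · exact ⟨a, le_rfl, rfl⟩
      · have hane : a ≠ ⊥ := fun h => by rw [h] at hlt; omega
        have hba : (⊥ : Q) < a := bot_lt_iff_ne_bot.mpr hane
        obtain ⟨c, -, hcab⟩ := exists_le_covby hba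
        have hc := hcov c a hcab
        obtain ⟨d, hd, hdm⟩ := IH c (by omega) m (by omega)
        exact ⟨d, hd.trans hcab.le, hdm⟩
  exact this (ρQ a) a le_rfl m h

lemma exists_isMax_above (a : Q) : ∃ m : Q, a ≤ m ∧ IsMax m := by
  classical
  obtain ⟨c, hc, hmax⟩ : ∃ i ∈ (Finset.univ.filter fun c => a ≤ c),
      ∀ x ∈ (Finset.univ.filter fun c => a ≤ c), ¬ i < x := by
    obtain ⟨i, hi⟩ := Finset.exists_maximal (s := Finset.univ.filter fun c => a ≤ c)
      ⟨a, by simp only [Finset.mem_filter, Finset.mem_univ, true_and]; exact le_rfl⟩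
    exact ⟨i, hi.1, fun x hx hlt => hlt.not_ge (hi.2 hx hlt.le)⟩
  simp only [Finset.mem_filter, Finset.mem_univ, true_and] at hc
  refine ⟨c, hc, fun d hcd => ?_⟩
  by_contra hdc
  refine hmax d ?_ (lt_of_le_not_ge hcd hdc)
  simp only [Finset.mem_filter, Finset.mem_univ, true_and]
  exact hc.trans hcd

include hcov in
lemma rank_le_of_pure {n : ℕ} (hpure : ∀ a : Q, IsMax a → ρQ a = n) (a : Q) :
    ρQ a ≤ n := by
  obtain ⟨m, ham, hm⟩ := exists_isMax_above a
  have := rank_mono ρQ hcov ham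
  rw [hpure m hm] at this
  exact this

include hcov in
lemma exists_rank [OrderBot Q] (hbot : ρQ ⊥ = 0) {n : ℕ}
    (hpure : ∀ a : Q, IsMax a → ρQ a = n) (m : ℕ) (hm : m ≤ n) :
    ∃ a : Q, ρQ a = m := by
  obtain ⟨t, -, ht⟩ := exists_isMax_above (⊥ : Q)
  obtain ⟨c, -, hc⟩ := exists_rank_le ρQ hcov hbot t m (by rw [hpure t ht]; exact hm)
  exact ⟨c, hc⟩

end rank

section row
variable {R : Type*} [CommRing R] (n : ℕ)
    (Q : Type*) [PartialOrder Q] [Fintype Q] [OrderBot Q]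
    (ρQ : Q → ℕ) (hbotQ : ρQ ⊥ = 0) (hcovQ : ∀ a b : Q, a ⋖ b → ρQ b = ρQ a + 1)
    (hpureQ : ∀ a : Q, IsMax a → ρQ a = n)
    (ϖQ : Q → Q → R) (hϖQ1 : ∀ a, ϖQ a a = 1)
    (hϖQm : ∀ a b c : Q, a ≤ b → b ≤ c → ϖQ a c = ϖQ a b * ϖQ b c)
    (Pi : ℕ → Type*) [∀ i, PartialOrder (Pi i)] [∀ i, Fintype (Pi i)] [∀ i, OrderBot (Pi i)]
    (ρi : ∀ i, Pi i → ℕ) (hρi0 : ∀ i, ρi i ⊥ = 0)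
    (hρicov : ∀ i, ∀ a b : Pi i, a ⋖ b → ρi i b = ρi i a + 1)
    (ϖi : ∀ i, Pi i → Pi i → R)
    (huni : ∀ x : Q, ∃ e : {y : Q // x ≤ y} ≃o Pi (n - ρQ x),
      (∀ z z' : {y : Q // x ≤ y}, ϖQ z.1 z'.1 = ϖi (n - ρQ x) (e z) (e z')) ∧
      (∀ z : {y : Q // x ≤ y}, ρi (n - ρQ x) (e z) = ρQ z.1 - ρQ x))

include hcovQ hρi0 hρicov huni in
lemma W_transfer (a : Q) (t : ℕ) :
    WWhitney (Pi (n - ρQ a)) (ρi _) (ϖi _) t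
      = ∑ b ∈ Finset.univ.filter (fun b => a ≤ b ∧ ρQ b = ρQ a + t), ϖQ a b := by
  obtain ⟨e, he1, he2⟩ := huni a
  have hebot : e ⟨a, le_rfl⟩ = ⊥ :=
    eq_bot_of_rank_zero (ρi _) (hρicov _) (hρi0 _) (by rw [he2]; simp)
  rw [WWhitney, finsum_setOf_eq_sum_filter]
  refine Finset.sum_bij' (i := fun z _ => ((e.symm z : {y : Q // a ≤ y}) : Q))
    (j := fun b hb => e ⟨b, by
      simp only [Finset.mem_filter, Finset.mem_univ, true_and] at hb; exact hb.1⟩)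
    ?_ ?_ ?_ ?_ ?_
  · intro z hz
    simp only [Finset.mem_filter, Finset.mem_univ, true_and] at hz ⊢
    have h2 := he2 (e.symm z)
    rw [e.apply_symm_apply] at h2
    have hmon := rank_mono ρQ hcovQ (e.symm z).2
    refine ⟨(e.symm z).2, ?_⟩
    omega
  · intro b hb
    simp only [Finset.mem_filter, Finset.mem_univ, true_and] at hb ⊢
    rw [he2]
    simp only
    omega
  · intro z hz
    exact e.apply_symm_apply z
  · intro b hb
    simp only [e.symm_apply_apply]
  · intro z hz
    have hh := he1 ⟨a, le_rfl⟩ (e.symm z)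
    simp only [e.apply_symm_apply, hebot] at hh
    rw [← hh]

include hcovQ hρi0 hρicov huni in
lemma w_transfer (a : Q) (t : ℕ) :
    wWhitney (Pi (n - ρQ a)) (ρi _) (ϖi _) t
      = ∑ b ∈ Finset.univ.filter (fun b => a ≤ b ∧ ρQ b = ρQ a + t),
          (mobiusP Q a b : ℤ) • ϖQ a b := by
  obtain ⟨e, he1, he2⟩ := huni a
  have hebot : e ⟨a, le_rfl⟩ = ⊥ :=
    eq_bot_of_rank_zero (ρi _) (hρicov _) (hρi0 _) (by rw [he2]; simp)
  have hmob : ∀ z : Pi (n - ρQ a),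
      mobiusP (Pi (n - ρQ a)) ⊥ z = mobiusP Q a ((e.symm z : {y : Q // a ≤ y}) : Q) := by
    intro z
    have := mobiusP_transfer (fun c : Pi (n - ρQ a) => ((e.symm c : {y : Q // a ≤ y}) : Q))
      ⊥ z bot_le ?_ ?_
    · rw [this]
      congr 1
      simp only [← hebot, e.symm_apply_apply]
    · intro c c' _ _ _ _
      show c ≤ c' ↔ ((e.symm c : {y : Q // a ≤ y}) : Q) ≤ ((e.symm c' : {y : Q // a ≤ y}) : Q)
      rw [Subtype.coe_le_coe, e.symm.le_iff_le]
    · intro d h1 h2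
      simp only [← hebot, e.symm_apply_apply] at h1 h2
      have h1' : a ≤ d := h1
      refine ⟨e ⟨d, h1'⟩, bot_le, ?_, ?_⟩
      · rw [← e.apply_symm_apply z, e.le_iff_le]
        exact h2
      · simp only [e.symm_apply_apply]
  rw [wWhitney, finsum_setOf_eq_sum_filter]
  refine Finset.sum_bij' (i := fun z _ => ((e.symm z : {y : Q // a ≤ y}) : Q))
    (j := fun b hb => e ⟨b, by
      simp only [Finset.mem_filter, Finset.mem_univ, true_and] at hb; exact hb.1⟩)
    ?_ ?_ ?_ ?_ ?_
  · intro z hz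
    simp only [Finset.mem_filter, Finset.mem_univ, true_and] at hz ⊢
    have h2 := he2 (e.symm z)
    rw [e.apply_symm_apply] at h2
    have hmon := rank_mono ρQ hcovQ (e.symm z).2
    refine ⟨(e.symm z).2, ?_⟩
    omega
  · intro b hb
    simp only [Finset.mem_filter, Finset.mem_univ, true_and] at hb ⊢
    rw [he2]
    simp only
    omega
  · intro z hz
    exact e.apply_symm_apply z
  · intro b hb
    simp only [e.symm_apply_apply]
  · intro z hz
    have hv := he1 ⟨a, le_rfl⟩ (e.symm z)
    simp only [e.apply_symm_apply, hebot] at hv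
    rw [← hv, hmob z]

include hcovQ hpureQ in
lemma collapse (j : ℕ) (hj : j ≤ n) (F : Q → Q → R) :
    ∑ k ∈ Finset.Icc j n, ∑ a ∈ Finset.univ.filter (fun a => ρQ a = n - k),
      ∑ b ∈ Finset.univ.filter (fun b => a ≤ b ∧ ρQ b = n - j), F a b
    = ∑ b ∈ Finset.univ.filter (fun b => ρQ b = n - j),
      ∑ a ∈ Finset.univ.filter (fun a => a ≤ b), F a b := by
  have hle : ∀ a : Q, ρQ a ≤ n := rank_le_of_pure ρQ hcovQ hpureQ
  have step1 : ∑ k ∈ Finset.Icc j n, ∑ a ∈ Finset.univ.filter (fun a => ρQ a = n - k),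
      ∑ b ∈ Finset.univ.filter (fun b => a ≤ b ∧ ρQ b = n - j), F a b
      = ∑ a ∈ Finset.univ.filter (fun a => ρQ a ≤ n - j),
      ∑ b ∈ Finset.univ.filter (fun b => a ≤ b ∧ ρQ b = n - j), F a b := by
    rw [← Finset.sum_fiberwise_of_maps_to (g := fun a : Q => n - ρQ a)
      (t := Finset.Icc j n) (s := Finset.univ.filter (fun a => ρQ a ≤ n - j))
      (fun a ha => by
        simp only [Finset.mem_filter, Finset.mem_univ, true_and] at ha
        simp only [Finset.mem_Icc]
        have := hle a
        omega)]
    apply Finset.sum_congr rfl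
    intro k hk
    simp only [Finset.mem_Icc] at hk
    apply Finset.sum_congr _ (fun _ _ => rfl)
    rw [Finset.filter_filter]
    ext a
    simp only [Finset.mem_filter, Finset.mem_univ, true_and]
    have := hle a
    omega
  have step2 : ∑ a ∈ Finset.univ.filter (fun a => ρQ a ≤ n - j),
      ∑ b ∈ Finset.univ.filter (fun b => a ≤ b ∧ ρQ b = n - j), F a b
      = ∑ b ∈ Finset.univ.filter (fun b => ρQ b = n - j),
      ∑ a ∈ Finset.univ.filter (fun a => a ≤ b), F a b := by
    apply Finset.sum_comm'
    intro a b
    simp only [Finset.mem_filter, Finset.mem_univ, true_and]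
    constructor
    · rintro ⟨h1, h2, h3⟩; exact ⟨h2, h3⟩
    · rintro ⟨h1, h2⟩
      refine ⟨?_, h1, h2⟩
      have := rank_mono ρQ hcovQ h1
      omega
  rw [step1, step2]

include hbotQ hϖQ1 in
lemma delta_sum (j : ℕ) (hj : j ≤ n) (g : Q → ℤ)
    (hg : ∀ b, ρQ b = n - j → g b = if (⊥ : Q) = b then 1 else 0) :
    ∑ b ∈ Finset.univ.filter (fun b => ρQ b = n - j), g b • ϖQ ⊥ b
      = if n = j then 1 else 0 := by
  have hterm : ∀ b ∈ Finset.univ.filter (fun b : Q => ρQ b = n - j),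
      g b • ϖQ ⊥ b = if ⊥ = b then ϖQ ⊥ b else 0 := by
    intro b hb
    simp only [Finset.mem_filter, Finset.mem_univ, true_and] at hb
    rw [hg b hb]
    by_cases h : (⊥ : Q) = b
    · simp [h]
    · simp [h]
  rw [Finset.sum_congr rfl hterm, Finset.sum_ite_eq]
  have hmem : ((⊥ : Q) ∈ Finset.univ.filter (fun b : Q => ρQ b = n - j)) ↔ n = j := by
    simp only [Finset.mem_filter, Finset.mem_univ, true_and, hbotQ]
    omega
  by_cases h : n = j
  · rw [if_pos (hmem.mpr h), hϖQ1, if_pos h]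
  · rw [if_neg (fun hm => h (hmem.mp hm)), if_neg h]

include hbotQ hcovQ hpureQ hϖQ1 hϖQm hρi0 hρicov huni in
lemma row_first (j : ℕ) (hj : j ≤ n) :
    ∑ k ∈ Finset.Icc j n, wWhitney Q ρQ ϖQ (n - k) * WWhitney (Pi k) (ρi k) (ϖi k) (k - j)
      = if n = j then 1 else 0 := by
  have hle : ∀ a : Q, ρQ a ≤ n := rank_le_of_pure ρQ hcovQ hpureQ
  have main : ∀ k ∈ Finset.Icc j n,
      wWhitney Q ρQ ϖQ (n - k) * WWhitney (Pi k) (ρi k) (ϖi k) (k - j)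
      = ∑ a ∈ Finset.univ.filter (fun a => ρQ a = n - k),
          ∑ b ∈ Finset.univ.filter (fun b => a ≤ b ∧ ρQ b = n - j),
            (mobiusP Q ⊥ a : ℤ) • ϖQ ⊥ b := by
    intro k hk
    simp only [Finset.mem_Icc] at hk
    rw [wWhitney, finsum_setOf_eq_sum_filter, Finset.sum_mul]
    refine Finset.sum_congr (Finset.filter_congr_decidable _ _ _) fun a ha => ?_
    simp only [Finset.mem_filter, Finset.mem_univ, true_and] at ha
    have hka : k = n - ρQ a := by have := hle a; omega
    subst hka
    rw [W_transfer n Q ρQ hcovQ ϖQ Pi ρi hρi0 hρicov ϖi huni a (n - ρQ a - j)]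
    have harith : ρQ a + (n - ρQ a - j) = n - j := by have := hle a; omega
    simp only [harith]
    rw [Finset.mul_sum]
    apply Finset.sum_congr rfl
    intro b hb
    simp only [Finset.mem_filter, Finset.mem_univ, true_and] at hb
    rw [smul_mul_assoc, ← hϖQm ⊥ a b bot_le hb.1]
  rw [Finset.sum_congr rfl main,
    collapse n Q ρQ hcovQ hpureQ j hj (fun a b => (mobiusP Q ⊥ a : ℤ) • ϖQ ⊥ b)]
  have inner : ∀ b ∈ Finset.univ.filter (fun b : Q => ρQ b = n - j),
      ∑ a ∈ Finset.univ.filter (fun a => a ≤ b), (mobiusP Q ⊥ a : ℤ) • ϖQ ⊥ b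
      = (∑ a ∈ Finset.univ.filter (fun a => a ≤ b), mobiusP Q ⊥ a) • ϖQ ⊥ b := by
    intro b _
    rw [Finset.sum_smul]
  rw [Finset.sum_congr rfl inner]
  apply delta_sum n Q ρQ hbotQ ϖQ hϖQ1 j hj
  intro b hb
  have hfil : (Finset.univ.filter (fun a : Q => a ≤ b))
      = Finset.univ.filter (fun a : Q => ⊥ ≤ a ∧ a ≤ b) := by
    ext a; simp
  rw [hfil]
  exact mobiusP_sum_left ⊥ b bot_le

include hbotQ hcovQ hpureQ hϖQ1 hϖQm hρi0 hρicov huni in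
lemma row_second (j : ℕ) (hj : j ≤ n) :
    ∑ k ∈ Finset.Icc j n, WWhitney Q ρQ ϖQ (n - k) * wWhitney (Pi k) (ρi k) (ϖi k) (k - j)
      = if n = j then 1 else 0 := by
  have hle : ∀ a : Q, ρQ a ≤ n := rank_le_of_pure ρQ hcovQ hpureQ
  have main : ∀ k ∈ Finset.Icc j n,
      WWhitney Q ρQ ϖQ (n - k) * wWhitney (Pi k) (ρi k) (ϖi k) (k - j)
      = ∑ a ∈ Finset.univ.filter (fun a => ρQ a = n - k),
          ∑ b ∈ Finset.univ.filter (fun b => a ≤ b ∧ ρQ b = n - j),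
            (mobiusP Q a b : ℤ) • ϖQ ⊥ b := by
    intro k hk
    simp only [Finset.mem_Icc] at hk
    rw [WWhitney, finsum_setOf_eq_sum_filter, Finset.sum_mul]
    refine Finset.sum_congr (Finset.filter_congr_decidable _ _ _) fun a ha => ?_
    simp only [Finset.mem_filter, Finset.mem_univ, true_and] at ha
    have hka : k = n - ρQ a := by have := hle a; omega
    subst hka
    rw [w_transfer n Q ρQ hcovQ ϖQ Pi ρi hρi0 hρicov ϖi huni a (n - ρQ a - j)]
    have harith : ρQ a + (n - ρQ a - j) = n - j := by have := hle a; omega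
    simp only [harith]
    rw [Finset.mul_sum]
    apply Finset.sum_congr rfl
    intro b hb
    simp only [Finset.mem_filter, Finset.mem_univ, true_and] at hb
    rw [mul_smul_comm, ← hϖQm ⊥ a b bot_le hb.1]
  rw [Finset.sum_congr rfl main,
    collapse n Q ρQ hcovQ hpureQ j hj (fun a b => (mobiusP Q a b : ℤ) • ϖQ ⊥ b)]
  have inner : ∀ b ∈ Finset.univ.filter (fun b : Q => ρQ b = n - j),
      ∑ a ∈ Finset.univ.filter (fun a => a ≤ b), (mobiusP Q a b : ℤ) • ϖQ ⊥ b
      = (∑ a ∈ Finset.univ.filter (fun a => a ≤ b), mobiusP Q a b) • ϖQ ⊥ b := by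
    intro b _
    rw [Finset.sum_smul]
  rw [Finset.sum_congr rfl inner]
  apply delta_sum n Q ρQ hbotQ ϖQ hϖQ1 j hj
  intro b hb
  have hfil : (Finset.univ.filter (fun a : Q => a ≤ b))
      = Finset.univ.filter (fun a : Q => ⊥ ≤ a ∧ a ≤ b) := by
    ext a; simp
  rw [hfil]
  exact mobiusP_sum_right ⊥ b bot_le

end row

/-- Let `P` be a finite pure poset of length `ℓ` with minimum element `⊥` and rank
function `ρ`, uniform with associated uniform sequence `(P_0,…,P_ℓ)` (each upper
order ideal `I_x = {y // x ≤ y}` is isomorphic to `P_{ℓ - ρ(x)}`), and let `ϖ` be a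
uniform `P`-compatible weight function with values in a commutative ring `R`,
inducing a `P_i`-compatible weight function `ϖᵢ` (and rank function `ρᵢ`) on each
`P_i` via the isomorphisms.  Then the matrices `[w_{i-j}(P_i,ϖᵢ)]_{0 ≤ i,j ≤ ℓ}`
and `[W_{i-j}(P_i,ϖᵢ)]_{0 ≤ i,j ≤ ℓ}` (with entries `0` for `j > i`) are inverses
of each other over `R`. -/
theorem uniform_whitney_matrices_inverse
    {R : Type*} [CommRing R] (ℓ : ℕ)
    (P : Type*) [PartialOrder P] [Fintype P] [OrderBot P]
    (ρ : P → ℕ) (hρbot : ρ ⊥ = 0) (hρcov : ∀ a b : P, a ⋖ b → ρ b = ρ a + 1)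
    (hpure : ∀ a : P, IsMax a → ρ a = ℓ)
    (ϖ : P → P → R) (hϖ1 : ∀ a : P, ϖ a a = 1)
    (hϖm : ∀ a b c : P, a ≤ b → b ≤ c → ϖ a c = ϖ a b * ϖ b c)
    (Pi : ℕ → Type*) [instPO : ∀ i, PartialOrder (Pi i)] [instFT : ∀ i, Fintype (Pi i)]
    [instOB : ∀ i, OrderBot (Pi i)]
    (ρi : ∀ i, Pi i → ℕ) (hρi0 : ∀ i, ρi i ⊥ = 0)
    (hρicov : ∀ i, ∀ a b : Pi i, a ⋖ b → ρi i b = ρi i a + 1)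
    (hpurei : ∀ i, ∀ a : Pi i, IsMax a → ρi i a = i)
    (ϖi : ∀ i, Pi i → Pi i → R) (hϖi1 : ∀ i, ∀ a : Pi i, ϖi i a a = 1)
    (hϖim : ∀ i, ∀ a b c : Pi i, a ≤ b → b ≤ c → ϖi i a c = ϖi i a b * ϖi i b c)
    (huni : ∀ x : P, ∃ e : {y : P // x ≤ y} ≃o Pi (ℓ - ρ x),
      (∀ z z' : {y : P // x ≤ y}, ϖ z.1 z'.1 = ϖi (ℓ - ρ x) (e z) (e z')) ∧
      (∀ z : {y : P // x ≤ y}, ρi (ℓ - ρ x) (e z) = ρ z.1 - ρ x)) :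
    (Matrix.of fun i j : Fin (ℓ + 1) =>
        if (j : ℕ) ≤ (i : ℕ) then wWhitney (Pi i) (ρi i) (ϖi i) ((i : ℕ) - j) else 0) *
      (Matrix.of fun i j : Fin (ℓ + 1) =>
        if (j : ℕ) ≤ (i : ℕ) then WWhitney (Pi i) (ρi i) (ϖi i) ((i : ℕ) - j) else 0) = 1 ∧
    (Matrix.of fun i j : Fin (ℓ + 1) =>
        if (j : ℕ) ≤ (i : ℕ) then WWhitney (Pi i) (ρi i) (ϖi i) ((i : ℕ) - j) else 0) *
      (Matrix.of fun i j : Fin (ℓ + 1) =>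
        if (j : ℕ) ≤ (i : ℕ) then wWhitney (Pi i) (ρi i) (ϖi i) ((i : ℕ) - j) else 0) = 1 := by
  have hrle : ∀ u : P, ρ u ≤ ℓ := rank_le_of_pure ρ hρcov hpure
  have huniP : ∀ i : ℕ, i ≤ ℓ → ∀ x : Pi i,
      ∃ e : {y : Pi i // x ≤ y} ≃o Pi (i - ρi i x),
        (∀ z z' : {y : Pi i // x ≤ y}, ϖi i z.1 z'.1 = ϖi (i - ρi i x) (e z) (e z')) ∧
        (∀ z : {y : Pi i // x ≤ y}, ρi (i - ρi i x) (e z) = ρi i z.1 - ρi i x) := by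
    intro i hi x
    obtain ⟨z0, hz0⟩ := exists_rank ρ hρcov hρbot hpure (ℓ - i) (by omega)
    have H := huni z0
    rw [show ℓ - ρ z0 = i by omega] at H
    obtain ⟨e0, he01, he02⟩ := H
    have hry : ∀ w : Pi i, ρi i w = ρ ((e0.symm w : {y : P // z0 ≤ y}) : P) - ρ z0 := by
      intro w
      have h := he02 (e0.symm w)
      rwa [e0.apply_symm_apply] at h
    have hmony : ∀ w : Pi i, ρ z0 ≤ ρ ((e0.symm w : {y : P // z0 ≤ y}) : P) :=
      fun w => rank_mono ρ hρcov (e0.symm w).2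
    have H2 := huni ((e0.symm x : {y : P // z0 ≤ y}) : P)
    rw [show ℓ - ρ ((e0.symm x : {y : P // z0 ≤ y}) : P) = i - ρi i x by
      have h1 := hrle ((e0.symm x : {y : P // z0 ≤ y}) : P)
      have h2 := hry x
      have h3 := hmony x
      omega] at H2
    obtain ⟨e1, he11, he12⟩ := H2
    have hgmem : ∀ w : {w : Pi i // x ≤ w},
        ((e0.symm x : {y : P // z0 ≤ y}) : P) ≤ ((e0.symm w.1 : {y : P // z0 ≤ y}) : P) :=
      fun w => Subtype.coe_le_coe.mpr (e0.symm.monotone w.2)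
    have hxval : e0 (e0.symm x) = x := e0.apply_symm_apply x
    let g : {w : Pi i // x ≤ w} ≃o {u : P // ((e0.symm x : {y : P // z0 ≤ y}) : P) ≤ u} :=
      { toFun := fun w => ⟨((e0.symm w.1 : {y : P // z0 ≤ y}) : P), hgmem w⟩
        invFun := fun u => ⟨e0 ⟨u.1, le_trans (e0.symm x).2 u.2⟩,
          le_trans (le_of_eq hxval.symm) (e0.monotone (by exact u.2))⟩
        left_inv := fun w => by
          apply Subtype.ext
          simp only
          rw [show (⟨((e0.symm w.1 : {y : P // z0 ≤ y}) : P), le_trans (e0.symm x).2 (hgmem w)⟩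
            : {y : P // z0 ≤ y}) = e0.symm w.1 from Subtype.ext rfl, e0.apply_symm_apply]
        right_inv := fun u => by
          apply Subtype.ext
          simp only [e0.symm_apply_apply]
        map_rel_iff' := @fun w w' => by
          constructor
          · intro h
            exact Subtype.mk_le_mk.mpr (e0.symm.le_iff_le.mp (Subtype.coe_le_coe.mp h))
          · intro h
            exact Subtype.mk_le_mk.mpr (Subtype.coe_le_coe.mpr (e0.symm.monotone h)) }
    refine ⟨g.trans e1, ?_, ?_⟩
    · intro z z'
      have h1 := he01 (e0.symm z.1) (e0.symm z'.1)
      simp only [e0.apply_symm_apply] at h1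
      have h2 := he11 (g z) (g z')
      rw [← h1]
      exact h2
    · intro z
      have h3 := he12 (g z)
      have h9 : ((g z : {u : P // ((e0.symm x : {y : P // z0 ≤ y}) : P) ≤ u}) : P)
          = ((e0.symm z.1 : {y : P // z0 ≤ y}) : P) := rfl
      rw [h9] at h3
      have h4 := hry z.1
      have h5 := hry x
      have h7 := hmony x
      have h8 : ρ ((e0.symm x : {y : P // z0 ≤ y}) : P)
          ≤ ρ ((e0.symm z.1 : {y : P // z0 ≤ y}) : P) := rank_mono ρ hρcov (hgmem z)
      rw [show (g.trans e1) z = e1 (g z) from rfl, h3]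
      omega
  have htop : ∀ i : Fin (ℓ+1), (i : ℕ) ≤ ℓ := fun i => by omega
  constructor
  · ext i j
    rw [Matrix.mul_apply, Matrix.one_apply]
    have hterm : ∀ k : Fin (ℓ+1),
        (Matrix.of fun i j : Fin (ℓ + 1) =>
          if (j : ℕ) ≤ (i : ℕ) then wWhitney (Pi i) (ρi i) (ϖi i) ((i : ℕ) - j) else 0) i k *
        (Matrix.of fun i j : Fin (ℓ + 1) =>
          if (j : ℕ) ≤ (i : ℕ) then WWhitney (Pi i) (ρi i) (ϖi i) ((i : ℕ) - j) else 0) k j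
        = if (k : ℕ) ∈ Finset.Icc (j : ℕ) (i : ℕ) then
            wWhitney (Pi i) (ρi i) (ϖi i) ((i:ℕ) - (k:ℕ))
              * WWhitney (Pi k) (ρi k) (ϖi k) ((k:ℕ) - (j:ℕ)) else 0 := by
      intro k
      simp only [Matrix.of_apply, Finset.mem_Icc]
      by_cases h1 : (k:ℕ) ≤ (i:ℕ) <;> by_cases h2 : (j:ℕ) ≤ (k:ℕ) <;>
        simp [h1, h2]
    rw [Finset.sum_congr rfl (fun k _ => hterm k)]
    rw [Fin.sum_univ_eq_sum_range (fun k => if k ∈ Finset.Icc (j : ℕ) (i : ℕ) then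
      wWhitney (Pi i) (ρi i) (ϖi i) ((i:ℕ) - k) * WWhitney (Pi k) (ρi k) (ϖi k) (k - (j:ℕ))
      else 0) (ℓ+1)]
    rw [Finset.sum_ite_mem, Finset.inter_eq_right.mpr (by
      intro k hk
      simp only [Finset.mem_Icc] at hk
      simp only [Finset.mem_range]
      have := htop i
      omega)]
    by_cases hij : (j : ℕ) ≤ (i : ℕ)
    · rw [row_first (↑i) (Pi ↑i) (ρi ↑i) (hρi0 ↑i) (hρicov ↑i) (hpurei ↑i) (ϖi ↑i)
        (hϖi1 ↑i) (hϖim ↑i) Pi ρi hρi0 hρicov ϖi (huniP ↑i (htop i)) ↑j hij]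
      by_cases h : i = j
      · rw [if_pos (by exact_mod_cast congrArg Fin.val h), if_pos h]
      · rw [if_neg (fun hh => h (Fin.ext hh)), if_neg h]
    · rw [Finset.Icc_eq_empty hij, Finset.sum_empty,
        if_neg (fun hh => hij (by rw [hh]))]
  · ext i j
    rw [Matrix.mul_apply, Matrix.one_apply]
    have hterm : ∀ k : Fin (ℓ+1),
        (Matrix.of fun i j : Fin (ℓ + 1) =>
          if (j : ℕ) ≤ (i : ℕ) then WWhitney (Pi i) (ρi i) (ϖi i) ((i : ℕ) - j) else 0) i k *
        (Matrix.of fun i j : Fin (ℓ + 1) =>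
          if (j : ℕ) ≤ (i : ℕ) then wWhitney (Pi i) (ρi i) (ϖi i) ((i : ℕ) - j) else 0) k j
        = if (k : ℕ) ∈ Finset.Icc (j : ℕ) (i : ℕ) then
            WWhitney (Pi i) (ρi i) (ϖi i) ((i:ℕ) - (k:ℕ))
              * wWhitney (Pi k) (ρi k) (ϖi k) ((k:ℕ) - (j:ℕ)) else 0 := by
      intro k
      simp only [Matrix.of_apply, Finset.mem_Icc]
      by_cases h1 : (k:ℕ) ≤ (i:ℕ) <;> by_cases h2 : (j:ℕ) ≤ (k:ℕ) <;>
        simp [h1, h2]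
    rw [Finset.sum_congr rfl (fun k _ => hterm k)]
    rw [Fin.sum_univ_eq_sum_range (fun k => if k ∈ Finset.Icc (j : ℕ) (i : ℕ) then
      WWhitney (Pi i) (ρi i) (ϖi i) ((i:ℕ) - k) * wWhitney (Pi k) (ρi k) (ϖi k) (k - (j:ℕ))
      else 0) (ℓ+1)]
    rw [Finset.sum_ite_mem, Finset.inter_eq_right.mpr (by
      intro k hk
      simp only [Finset.mem_Icc] at hk
      simp only [Finset.mem_range]
      have := htop i
      omega)]
    by_cases hij : (j : ℕ) ≤ (i : ℕ)
    · rw [row_second (↑i) (Pi ↑i) (ρi ↑i) (hρi0 ↑i) (hρicov ↑i) (hpurei ↑i) (ϖi ↑i)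
        (hϖi1 ↑i) (hϖim ↑i) Pi ρi hρi0 hρicov ϖi (huniP ↑i (htop i)) ↑j hij]
      by_cases h : i = j
      · rw [if_pos (by exact_mod_cast congrArg Fin.val h), if_pos h]
      · rw [if_neg (fun hh => h (Fin.ext hh)), if_neg h]
    · rw [Finset.Icc_eq_empty hij, Finset.sum_empty,
        if_neg (fun hh => hij (by rw [hh]))]
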